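/- Let ξ be a random variable with standard Gaussian law N(0,1) on a probability space (Ω, F, P). Define f(x) = (min(max(x,0),1))^{3/4} and g(x) = (3/4)·x^{-1/4} for 0 < x < 1 and g(x) = 0 otherwise, and for ε > 0 set F_ε = √ε·(f(ξ)·ξ − g(ξ)). Then for every α > 0: limsup_{L→∞} limsup_{ε→0⁺} ε^α · log P(|F_ε| > L) = 0. -/

import Mathlib

open MeasureTheory ProbabilityTheory Filter Set

/-- `f x = (min (max x 0) 1)^(3/4)`, the function of the paper's counterexample. -/
noncomputable def f (x : ℝ) : ℝ := (min (max x 0) 1) ^ ((3 : ℝ) / 4)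

/-- `g` is the a.e. derivative of `f`: `g x = (3/4) x^(-1/4)` on `(0,1)` and `0` elsewhere. -/
noncomputable def g (x : ℝ) : ℝ :=
  if 0 < x ∧ x < 1 then (3 / 4 : ℝ) * x ^ (-(1 / 4 : ℝ)) else 0

/-- Lower bound constant for the gaussian density on `(0,1)`. -/
noncomputable def cGauss : ℝ := (Real.sqrt (2 * Real.pi))⁻¹ * Real.exp (-(1 / 2 : ℝ))

lemma cGauss_pos : 0 < cGauss := by
  have h2π : 0 < 2 * Real.pi := by positivity
  exact mul_pos (inv_pos.mpr (Real.sqrt_pos.mpr h2π)) (Real.exp_pos _)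

/-- The key constant `K L`. -/
noncomputable def Kc (L : ℝ) : ℝ := cGauss * (3 / (4 * (L + 2))) ^ (4 : ℕ)

lemma Kc_pos {L : ℝ} (hL : 0 ≤ L) : 0 < Kc L := by
  have h : 0 < L + 2 := by linarith
  have : 0 < (3 / (4 * (L + 2))) := by positivity
  exact mul_pos cGauss_pos (by positivity)

/-- Pointwise: if `ξ ω` lies in `(0, δ)` with `δ = (3/(4(L+2)))^4 ε²`, then `|F ε ω| > L`. -/
lemma pointwise_bound {L ε x : ℝ} (hL : 0 ≤ L) (hε0 : 0 < ε) (hε1 : ε < 1)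
    (hx : x ∈ Ioo 0 ((3 / (4 * (L + 2))) ^ (4 : ℕ) * ε ^ 2)) :
    L < |Real.sqrt ε * (f x * x - g x)| := by
  obtain ⟨hx0, hxδ⟩ := hx
  have hL2 : 0 < L + 2 := by linarith
  have hsε : 0 < Real.sqrt ε := Real.sqrt_pos.mpr hε0
  have hsε1 : Real.sqrt ε < 1 := by
    rw [show (1 : ℝ) = Real.sqrt 1 from (Real.sqrt_one).symm]
    exact Real.sqrt_lt_sqrt hε0.le hε1
  set a : ℝ := 3 / (4 * (L + 2)) * Real.sqrt ε with ha_def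
  have ha : 0 < a := by positivity
  have hδa : (3 / (4 * (L + 2))) ^ (4 : ℕ) * ε ^ 2 = a ^ (4 : ℕ) := by
    have : Real.sqrt ε ^ (2 : ℕ) = ε := Real.sq_sqrt hε0.le
    rw [ha_def, mul_pow]
    rw [show (4 : ℕ) = 2 * 2 from rfl, pow_mul (Real.sqrt ε), this]
  rw [hδa] at hxδ
  have hδ1 : a ^ (4 : ℕ) < 1 := by
    have h1 : a < 1 := by
      rw [ha_def]
      have h2 : 3 / (4 * (L + 2)) ≤ 3 / 8 := by
        apply div_le_div_of_nonneg_left (by norm_num) (by norm_num) (by linarith)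
      nlinarith
    exact pow_lt_one₀ (by positivity) h1 (by norm_num)
  have hx1 : x < 1 := lt_trans hxδ hδ1
  -- f x = x ^ (3/4), g x = (3/4) x^(-1/4)
  have hf : f x = x ^ ((3 : ℝ) / 4) := by
    rw [f, max_eq_left hx0.le, min_eq_left hx1.le]
  have hg : g x = (3 / 4 : ℝ) * x ^ (-(1 / 4 : ℝ)) := by
    rw [g, if_pos ⟨hx0, hx1⟩]
  -- f x * x ∈ [0, 1]
  have hfx_nonneg : 0 ≤ f x * x := by
    rw [hf]; positivity
  have hfx_le : f x * x ≤ 1 := by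
    rw [hf]
    have h1 : x ^ ((3 : ℝ) / 4) ≤ 1 := Real.rpow_le_one hx0.le hx1.le (by norm_num)
    nlinarith
  -- g x ≥ (L+2)/√ε
  have hδ_rpow : (a ^ (4 : ℕ) : ℝ) ^ (-(1 / 4 : ℝ)) = a⁻¹ := by
    rw [← Real.rpow_natCast a 4, ← Real.rpow_mul ha.le]
    norm_num [Real.rpow_neg_one]
  have hmono : (a ^ (4 : ℕ) : ℝ) ^ (-(1 / 4 : ℝ)) ≤ x ^ (-(1 / 4 : ℝ)) :=
    Real.rpow_le_rpow_of_nonpos hx0 hxδ.le (by norm_num)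
  have hainv : a⁻¹ = 4 * (L + 2) / (3 * Real.sqrt ε) := by
    rw [ha_def]
    field_simp
  have hg_ge : (L + 2) / Real.sqrt ε ≤ g x := by
    rw [hg]
    have h1 : a⁻¹ ≤ x ^ (-(1 / 4 : ℝ)) := by rw [← hδ_rpow]; exact hmono
    have h2 : (3 / 4 : ℝ) * a⁻¹ ≤ (3 / 4 : ℝ) * x ^ (-(1 / 4 : ℝ)) := by linarith
    refine le_trans (le_of_eq ?_) h2
    rw [hainv]
    field_simp
  -- conclude
  have habs : Real.sqrt ε * (g x - f x * x) ≤ |Real.sqrt ε * (f x * x - g x)| := by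
    rw [abs_mul, abs_of_nonneg hsε.le]
    have : g x - f x * x ≤ |f x * x - g x| := by
      rw [abs_sub_comm]; exact le_abs_self _
    exact mul_le_mul_of_nonneg_left this hsε.le
  have hkey : L + 2 - Real.sqrt ε ≤ Real.sqrt ε * (g x - f x * x) := by
    have h1 : (L + 2) ≤ Real.sqrt ε * g x := by
      have := mul_le_mul_of_nonneg_left hg_ge hsε.le
      rwa [mul_div_cancel₀ _ hsε.ne'] at this
    nlinarith
  have : L < L + 2 - Real.sqrt ε := by linarith
  linarith [le_trans hkey habs]

/-- Measure lower bound on intervals: gaussian of `Ioo 0 δ` with `δ ∈ (0,1)` is at least `cGauss·δ`. -/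
lemma gaussian_Ioo_lower {δ : ℝ} (hδ0 : 0 < δ) (hδ1 : δ ≤ 1) :
    ENNReal.ofReal (cGauss * δ) ≤ gaussianReal 0 1 (Ioo 0 δ) := by
  rw [gaussianReal_apply 0 one_ne_zero]
  have hbound : ∀ x ∈ Ioo (0 : ℝ) δ, ENNReal.ofReal cGauss ≤ gaussianPDF 0 1 x := by
    intro x hx
    obtain ⟨hx0, hxδ⟩ := hx
    have hx1 : x ≤ 1 := le_trans hxδ.le hδ1
    apply ENNReal.ofReal_le_ofReal
    rw [gaussianPDFReal]
    simp only [NNReal.coe_one, mul_one, sub_zero]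
    rw [cGauss]
    have hexp : Real.exp (-(1 / 2 : ℝ)) ≤ Real.exp (-x ^ 2 / 2) := by
      apply Real.exp_le_exp.mpr
      nlinarith
    exact mul_le_mul_of_nonneg_left hexp (by positivity)
  calc ENNReal.ofReal (cGauss * δ)
      = ENNReal.ofReal cGauss * ENNReal.ofReal δ := ENNReal.ofReal_mul cGauss_pos.le
    _ = ENNReal.ofReal cGauss * volume (Ioo (0 : ℝ) δ) := by
        rw [Real.volume_Ioo, sub_zero]
    _ = ∫⁻ _ in Ioo (0 : ℝ) δ, ENNReal.ofReal cGauss := (setLIntegral_const _ _).symm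
    _ ≤ ∫⁻ x in Ioo (0 : ℝ) δ, gaussianPDF 0 1 x :=
        setLIntegral_mono (measurable_gaussianPDF 0 1) hbound

theorem stmt_0 {Ω : Type*} [MeasurableSpace Ω] (P : Measure Ω) [IsProbabilityMeasure P]
    (ξ : Ω → ℝ) (hξ : Measurable ξ) (hlaw : P.map ξ = gaussianReal 0 1)
    (F : ℝ → Ω → ℝ)
    (hF : ∀ ε ω, F ε ω = Real.sqrt ε * (f (ξ ω) * ξ ω - g (ξ ω)))
    (α : ℝ) (hα : 0 < α) :
    limsup (fun L : ℝ =>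
        limsup (fun ε : ℝ => ((ε ^ α : ℝ) : EReal) * ENNReal.log (P {ω | L < |F ε ω|}))
          (nhdsWithin (0 : ℝ) (Ioi 0))) atTop = 0 := by
  have hmem : Ioo (0 : ℝ) 1 ∈ nhdsWithin (0 : ℝ) (Ioi 0) :=
    Ioo_mem_nhdsGT_of_mem (by constructor <;> norm_num)
  have hmain : ∀ᶠ L in (atTop : Filter ℝ),
      limsup (fun ε : ℝ => ((ε ^ α : ℝ) : EReal) * ENNReal.log (P {ω | L < |F ε ω|}))
        (nhdsWithin (0 : ℝ) (Ioi 0)) = 0 := by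
    filter_upwards [eventually_ge_atTop (0 : ℝ)] with L hL
    set K := Kc L with hK_def
    have hK : 0 < K := Kc_pos hL
    -- measure lower bound for ε ∈ (0,1)
    have hmeas : ∀ ε ∈ Ioo (0 : ℝ) 1,
        ENNReal.ofReal (K * ε ^ 2) ≤ P {ω | L < |F ε ω|} := by
      intro ε hε
      obtain ⟨hε0, hε1⟩ := hε
      set δ : ℝ := (3 / (4 * (L + 2))) ^ (4 : ℕ) * ε ^ 2 with hδ_def
      have hL2 : 0 < L + 2 := by linarith
      have hδ0 : 0 < δ := by positivity
      have hδ1 : δ ≤ 1 := by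
        have h2 : 3 / (4 * (L + 2)) ≤ 3 / 8 := by
          apply div_le_div_of_nonneg_left (by norm_num) (by norm_num) (by linarith)
        have h3 : (3 / (4 * (L + 2))) ^ (4 : ℕ) ≤ (3 / 8 : ℝ) ^ (4 : ℕ) :=
          pow_le_pow_left₀ (by positivity) h2 4
        have h4 : ε ^ 2 ≤ 1 := by nlinarith
        have h5 : (0:ℝ) ≤ (3 / (4 * (L + 2))) ^ (4 : ℕ) := by positivity
        nlinarith
      have hsub : ξ ⁻¹' (Ioo 0 δ) ⊆ {ω | L < |F ε ω|} := by
        intro ω hω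
        rw [mem_setOf_eq, hF]
        exact pointwise_bound hL hε0 hε1 hω
      calc ENNReal.ofReal (K * ε ^ 2)
          = ENNReal.ofReal (cGauss * δ) := by
            rw [hK_def, Kc, hδ_def]; ring_nf
        _ ≤ gaussianReal 0 1 (Ioo 0 δ) := gaussian_Ioo_lower hδ0 hδ1
        _ = P.map ξ (Ioo 0 δ) := by rw [hlaw]
        _ = P (ξ ⁻¹' (Ioo 0 δ)) := Measure.map_apply hξ measurableSet_Ioo
        _ ≤ P {ω | L < |F ε ω|} := measure_mono hsub
    -- the lower bound real function tends to 0
    have hrpow : Tendsto (fun ε : ℝ => ε ^ α) (nhdsWithin 0 (Ioi 0)) (nhds 0) := by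
      have h := (Real.continuousAt_rpow_const 0 α (Or.inr hα.le)).tendsto
      rw [Real.zero_rpow hα.ne'] at h
      exact h.mono_left nhdsWithin_le_nhds
    have hlo : Tendsto (fun ε : ℝ => ε ^ α * Real.log (K * ε ^ 2))
        (nhdsWithin 0 (Ioi 0)) (nhds 0) := by
      have h1 : Tendsto (fun ε : ℝ => ε ^ α * Real.log K + 2 * (Real.log ε * ε ^ α))
          (nhdsWithin 0 (Ioi 0)) (nhds 0) := by
        have ha := hrpow.mul_const (Real.log K)
        have hb := (tendsto_log_mul_rpow_nhdsGT_zero hα).const_mul (2 : ℝ)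
        simpa using ha.add hb
      apply h1.congr'
      filter_upwards [self_mem_nhdsWithin] with ε (hε : ε ∈ Ioi (0 : ℝ))
      have hε0 : (0 : ℝ) < ε := hε
      rw [Real.log_mul hK.ne' (by positivity), Real.log_pow]
      push_cast
      ring
    -- squeeze in EReal
    have hloE : Tendsto (fun ε : ℝ => ((ε ^ α * Real.log (K * ε ^ 2) : ℝ) : EReal))
        (nhdsWithin 0 (Ioi 0)) (nhds 0) := by
      have := (continuous_coe_real_ereal.tendsto 0).comp hlo
      simpa [-EReal.coe_mul, Function.comp_def] using this
    have hub : ∀ᶠ ε in nhdsWithin (0 : ℝ) (Ioi 0),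
        ((ε ^ α : ℝ) : EReal) * ENNReal.log (P {ω | L < |F ε ω|}) ≤ 0 := by
      filter_upwards [hmem] with ε hε
      obtain ⟨hε0, hε1⟩ := hε
      have hPle : P {ω | L < |F ε ω|} ≤ 1 := prob_le_one
      have hPpos : 0 < (P {ω | L < |F ε ω|}).toReal := by
        refine ENNReal.toReal_pos (fun h0 => ?_) (measure_ne_top P _)
        have hle := hmeas ε ⟨hε0, hε1⟩
        rw [h0] at hle
        have hpos : 0 < ENNReal.ofReal (K * ε ^ 2) := ENNReal.ofReal_pos.mpr (by positivity)
        exact absurd (le_antisymm hle zero_le) hpos.ne'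
      rw [ENNReal.log_pos_real' hPpos, ← EReal.coe_mul]
      rw [show (0 : EReal) = ((0 : ℝ) : EReal) from rfl, EReal.coe_le_coe_iff]
      apply mul_nonpos_of_nonneg_of_nonpos (Real.rpow_nonneg hε0.le α)
      apply Real.log_nonpos ENNReal.toReal_nonneg
      rw [← ENNReal.toReal_one]
      exact ENNReal.toReal_mono ENNReal.one_ne_top hPle
    have hlb : ∀ᶠ ε in nhdsWithin (0 : ℝ) (Ioi 0),
        ((ε ^ α * Real.log (K * ε ^ 2) : ℝ) : EReal) ≤
          ((ε ^ α : ℝ) : EReal) * ENNReal.log (P {ω | L < |F ε ω|}) := by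
      filter_upwards [hmem] with ε hε
      obtain ⟨hε0, hε1⟩ := hε
      have hle := hmeas ε ⟨hε0, hε1⟩
      have hKε : 0 < K * ε ^ 2 := by positivity
      have hPpos : 0 < (P {ω | L < |F ε ω|}).toReal := by
        refine ENNReal.toReal_pos (fun h0 => ?_) (measure_ne_top P _)
        rw [h0] at hle
        have hpos : 0 < ENNReal.ofReal (K * ε ^ 2) := ENNReal.ofReal_pos.mpr hKε
        exact absurd (le_antisymm hle zero_le) hpos.ne'
      have hKεle : K * ε ^ 2 ≤ (P {ω | L < |F ε ω|}).toReal :=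
        (ENNReal.ofReal_le_iff_le_toReal (measure_ne_top P _)).mp hle
      rw [ENNReal.log_pos_real' hPpos, ← EReal.coe_mul, EReal.coe_le_coe_iff]
      exact mul_le_mul_of_nonneg_left (Real.log_le_log hKε hKεle)
        (Real.rpow_nonneg hε0.le α)
    have hT : Tendsto (fun ε : ℝ => ((ε ^ α : ℝ) : EReal) *
        ENNReal.log (P {ω | L < |F ε ω|})) (nhdsWithin 0 (Ioi 0)) (nhds 0) :=
      tendsto_of_tendsto_of_tendsto_of_le_of_le' hloE tendsto_const_nhds hlb hub
    exact hT.limsup_eq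
  rw [limsup_congr hmain]
  exact limsup_const 0
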